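/- Let N be a left strongly regular zero-symmetric unital right near-ring and a ∈ N. Then a² is a regular element of N, i.e., there exists y ∈ N with a² = a²·y·a² (in fact, if a = x·a² then a² = a²·x²·a²). -/

import Mathlib

/-- A zero-symmetric unital right near-ring: an additive group (not necessarily
abelian) and a multiplicative monoid with `1 ≠ 0`, satisfying the right
distributive law, and zero-symmetric (`x * 0 = 0`). -/
class ZSNearRing (N : Type*) extends AddGroup N, Monoid N where
  right_distrib : ∀ x y z : N, (x + y) * z = x * z + y * z
  mul_zero : ∀ x : N, x * 0 = 0
  one_ne_zero : (1 : N) ≠ (0 : N)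

namespace ZSNearRing

variable {N : Type*} [ZSNearRing N]

/-- The set `Na = {n·a : n ∈ N}`. -/
def NSet (a : N) : Set N := {x | ∃ n : N, x = n * a}

/-- The left annihilator `(0 :ₗ a) = {x ∈ N : x·a = 0}`. -/
def lAnn (a : N) : Set N := {x | x * a = 0}

/-- `a` is left morphic if there is `b` with `Na = (0 :ₗ b)` and `Nb = (0 :ₗ a)`. -/
def IsLeftMorphic (a : N) : Prop := ∃ b : N, NSet a = lAnn b ∧ NSet b = lAnn a

end ZSNearRing

open ZSNearRing

section aux

variable {N : Type*} [ZSNearRing N]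

private lemma zsr_zero_mul (z : N) : (0 : N) * z = 0 := by
  have h := ZSNearRing.right_distrib (0 : N) 0 z
  rw [add_zero] at h
  exact left_eq_add.mp h

private lemma zsr_neg_mul (u z : N) : (-u) * z = -(u * z) := by
  have h := ZSNearRing.right_distrib u (-u) z
  rw [add_neg_cancel, zsr_zero_mul] at h
  exact eq_neg_of_add_eq_zero_right h.symm

private lemma zsr_sub_mul (u v z : N) : (u - v) * z = u * z - v * z := by
  rw [sub_eq_add_neg, sub_eq_add_neg, ZSNearRing.right_distrib, zsr_neg_mul]

private lemma zsr_reduced (hsr : ∀ b : N, ∃ x : N, b = x * (b * b))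
    (b : N) (hb : b * b = 0) : b = 0 := by
  obtain ⟨y, hy⟩ := hsr b
  rw [hy, hb, ZSNearRing.mul_zero]

private lemma zsr_key (hsr : ∀ b : N, ∃ x : N, b = x * (b * b))
    (a x : N) (hx : a = x * (a * a)) : a * x * a = a := by
  set d : N := a * x * a - a with hd
  have hda : d * a = 0 := by
    rw [hd, zsr_sub_mul]
    have : a * x * a * a = a * a := by
      rw [mul_assoc (a * x) a a, mul_assoc a x (a*a), ← hx]
    rw [this, sub_self]
  have had : a * d = 0 := by
    apply zsr_reduced hsr
    have : a * d * (a * d) = a * (d * a) * d := by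
      rw [mul_assoc, ← mul_assoc d a d, ← mul_assoc a (d*a) d]
    rw [this, hda, ZSNearRing.mul_zero, zsr_zero_mul]
  have hdd : d * d = 0 := by
    rw [hd, zsr_sub_mul (a*x*a) a d]
    have : a * x * a * d = 0 := by
      rw [mul_assoc (a*x) a d, had, ZSNearRing.mul_zero]
    rw [this, had, sub_self]
  have : d = 0 := zsr_reduced hsr d hdd
  exact sub_eq_zero.mp (hd ▸ this)

end aux

theorem stmt5 {N : Type*} [ZSNearRing N]
    (hsr : ∀ b : N, ∃ x : N, b = x * (b * b)) (a : N) :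
    (∃ y : N, a * a = a * a * y * (a * a)) ∧
    (∀ x : N, a = x * (a * a) → a * a = a * a * (x * x) * (a * a)) := by
  have main : ∀ x : N, a = x * (a * a) → a * a = a * a * (x * x) * (a * a) := by
    intro x hx
    have haxa : a * x * a = a := zsr_key hsr a x hx
    simp only [mul_assoc]
    rw [← hx, ← mul_assoc a x a, haxa]
  refine ⟨?_, main⟩
  obtain ⟨x, hx⟩ := hsr a
  exact ⟨x * x, main x hx⟩
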